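/- Let 𝒞 be an abelian category, Z : K_0(𝒞) → ℂ a stability function with phase φ(A) ∈ (0,1] for nonzero A, and Φ : 𝒞 → Vect_k a left exact functor (framing). Let (M_0, s_0) be a stable framed object of phase φ (M_0 is Z-semistable of phase φ, s_0 ∈ Φ(M_0), and φ(A) < φ(M_0) for every proper subobject A ⊆ M_0 with s_0 ∈ Φ(A)). Let A ↪ M_0 be an inclusion with A Z-semistable of phase φ, let M_1 = M_0/A (also assumed semistable of phase φ), and let s_1 ∈ Φ(M_1) be the image of s_0 under Φ(M_0) → Φ(M_1). Then (M_1, s_1) is again a stable framed object; in particular s_1 ≠ 0. -/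

import Mathlib

open CategoryTheory Limits Opposite

namespace StableFramedStmt

universe v u w

variable {C : Type u} [Category.{v} C] [Abelian C]

/-- The phase of an object with respect to a stability function `Z` (as a multiple of
`π`, we use `arg (Z A) ∈ (0, π]` directly). -/
noncomputable def pha (Z : C → ℂ) (A : C) : ℝ := (Z A).arg

/-- `M` is `Z`-semistable: it is nonzero and every nonzero subobject has phase at most
the phase of `M`. -/
def Semistable (Z : C → ℂ) (M : C) : Prop :=
  ¬ IsZero M ∧ ∀ A : Subobject M, ¬ IsZero (A : C) → pha Z (A : C) ≤ pha Z M

/-- Comparison of arguments for complex numbers in the upper half plane, via the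
cross product. -/
lemma arg_le_arg_iff_cross {z w : ℂ} (hz : z ≠ 0) (hw : w ≠ 0)
    (hz0 : 0 < z.arg) (hw0 : 0 < w.arg) :
    z.arg ≤ w.arg ↔ 0 ≤ z.re * w.im - z.im * w.re := by
  have hzπ := Complex.arg_le_pi z
  have hwπ := Complex.arg_le_pi w
  have habz : 0 < ‖z‖ := by simpa using hz
  have habw : 0 < ‖w‖ := by simpa using hw
  have hcross : z.re * w.im - z.im * w.re
      = (‖z‖ * ‖w‖) * Real.sin (w.arg - z.arg) := by
    rw [Real.sin_sub, ← Complex.norm_mul_cos_arg z, ← Complex.norm_mul_sin_arg z,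
      ← Complex.norm_mul_cos_arg w, ← Complex.norm_mul_sin_arg w]
    ring
  rw [hcross, mul_nonneg_iff_of_pos_left (mul_pos habz habw)]
  constructor
  · intro h
    exact Real.sin_nonneg_of_nonneg_of_le_pi (by linarith) (by linarith)
  · intro h
    by_contra hc
    push_neg at hc
    have := Real.sin_neg_of_neg_of_neg_pi_lt (x := w.arg - z.arg) (by linarith) (by linarith)
    linarith

/-- See-saw: the argument of a sum dominates the smaller argument. -/
lemma arg_le_arg_add {z w : ℂ} (hz : z ≠ 0) (hw : w ≠ 0) (hzw : z + w ≠ 0)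
    (hz0 : 0 < z.arg) (hw0 : 0 < w.arg) (hzw0 : 0 < (z + w).arg)
    (h : z.arg ≤ w.arg) : z.arg ≤ (z + w).arg := by
  rw [arg_le_arg_iff_cross hz hzw hz0 hzw0]
  have h2 := (arg_le_arg_iff_cross hz hw hz0 hw0).1 h
  simp only [Complex.add_re, Complex.add_im]
  nlinarith [h2]

/-- let `Z` be a stability function on an abelian category `C` (additive
on short exact sequences, with values in the upper half plane `ℍ₊` on nonzero objects)
and `Φ = F` a left exact framing functor to vector spaces.  If `(M₀, s₀)` is a stable
framed object of phase `φ`, `A ↪ M₀` has `A` semistable of phase `φ`, and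
`M₁ = M₀/A` is semistable of phase `φ`, then `(M₁, s₁)` is stable framed, where `s₁` is
the image of `s₀`; in particular `s₁ ≠ 0`. -/
theorem statement18
    (k : Type w) [Field k]
    (Z : C → ℂ)
    (hZiso : ∀ (A B : C), (A ≅ B) → Z A = Z B)
    (hZadd : ∀ {A B : C} (f : A ⟶ B) [Mono f], Z B = Z A + Z (cokernel f))
    (hZH : ∀ A : C, ¬ IsZero A → Z A ≠ 0 ∧ 0 < (Z A).arg)
    (F : C ⥤ ModuleCat.{w} k) [F.Additive] [PreservesFiniteLimits F]
    (φ : ℝ)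
    (M₀ : C) (s₀ : F.obj M₀)
    (hssM₀ : Semistable Z M₀) (hphM₀ : pha Z M₀ = φ)
    (hstab : ∀ A : Subobject M₀, A ≠ ⊤ → s₀ ∈ Set.range (F.map A.arrow) →
      pha Z (A : C) < pha Z M₀)
    (A : C) (ι : A ⟶ M₀) [Mono ι]
    (hssA : Semistable Z A) (hphA : pha Z A = φ)
    (hssM₁ : Semistable Z (cokernel ι)) (hphM₁ : pha Z (cokernel ι) = φ) :
    F.map (cokernel.π ι) s₀ ≠ 0 ∧
      ∀ B : Subobject (cokernel ι), B ≠ ⊤ →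
        F.map (cokernel.π ι) s₀ ∈ Set.range (F.map B.arrow) →
        pha Z (B : C) < pha Z (cokernel ι) := by
  have hφpos : 0 < φ := by
    rw [← hphM₀]
    exact (hZH M₀ hssM₀.1).2
  -- `Z` of a zero object is `0`.
  have hZzero : ∀ X : C, IsZero X → Z X = 0 := by
    intro X hX
    have h1 := hZadd (𝟙 M₀)
    have h0 : IsZero (cokernel (𝟙 M₀)) :=
      IsZero.of_iso (isZero_zero C) (cokernel.ofEpi (𝟙 M₀))
    have h2 : Z X = Z (cokernel (𝟙 M₀)) := hZiso _ _ (hX.iso h0)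
    rw [h2]
    exact (left_eq_add.mp h1)
  constructor
  · -- s₁ ≠ 0
    intro hs1
    -- `ι` is the kernel of `cokernel.π ι`, and `F` preserves this kernel.
    have hker : IsLimit (KernelFork.ofι ι (cokernel.condition ι)) :=
      Abelian.monoIsKernelOfCokernel
        (CokernelCofork.ofπ (cokernel.π ι) (cokernel.condition ι)) (cokernelIsCokernel ι)
    have hkerF := isLimitForkMapOfIsLimit' F (cokernel.condition ι) hker
    let t : ModuleCat.of k k ⟶ F.obj M₀ :=
      ModuleCat.ofHom (LinearMap.toSpanSingleton k _ s₀)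
    have ht : t ≫ F.map (cokernel.π ι) = 0 := by
      apply ModuleCat.hom_ext
      apply LinearMap.ext; intro c
      show F.map (cokernel.π ι) (c • s₀) = 0
      rw [map_smul, hs1, smul_zero]
    obtain ⟨l, hl⟩ := KernelFork.IsLimit.lift' hkerF t ht
    have hs₀ : F.map ι (l (1 : k)) = s₀ := by
      have h1 := ConcreteCategory.congr_hom hl (1 : k)
      have h2 : F.map ι (l (1 : k)) = (1 : k) • s₀ := h1
      rwa [one_smul] at h2
    have hne : Subobject.mk ι ≠ ⊤ := by
      intro h
      haveI : IsIso ι := (Subobject.isIso_iff_mk_eq_top ι).2 h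
      exact hssM₁.1 (IsZero.of_iso (isZero_zero C) (cokernel.ofEpi ι))
    have hrange : s₀ ∈ Set.range (F.map (Subobject.mk ι).arrow) := by
      refine ⟨F.map (Subobject.underlyingIso ι).inv (l (1 : k)), ?_⟩
      have h3 : F.map (Subobject.underlyingIso ι).inv ≫ F.map (Subobject.mk ι).arrow
          = F.map ι := by rw [← F.map_comp, Subobject.underlyingIso_arrow]
      have h4 := ConcreteCategory.congr_hom h3 (l (1 : k))
      exact h4.trans hs₀
    have hlt := hstab _ hne hrange
    rw [hphM₀] at hlt
    have heq : pha Z ((Subobject.mk ι : Subobject M₀) : C) = φ := by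
      unfold pha
      rw [hZiso _ _ (Subobject.underlyingIso ι)]
      exact hphA
    linarith [heq ▸ hlt]
  · -- stability of (M₁, s₁)
    intro B hBne hBrange
    obtain ⟨b, hb⟩ := hBrange
    -- the pullback of B along the quotient map
    let fst := pullback.fst B.arrow (cokernel.π ι)
    let snd := pullback.snd B.arrow (cokernel.π ι)
    have hcond : fst ≫ B.arrow = snd ≫ cokernel.π ι := pullback.condition
    haveI : Epi fst := Abelian.epi_pullback_of_epi_g _ _
    -- the canonical map from A to the pullback
    let u : A ⟶ pullback B.arrow (cokernel.π ι) :=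
      pullback.lift 0 ι (by simp [cokernel.condition])
    have hufst : u ≫ fst = 0 := pullback.lift_fst _ _ _
    have husnd : u ≫ snd = ι := pullback.lift_snd _ _ _
    haveI hu : Mono u := by
      have : Mono (u ≫ snd) := by rw [husnd]; infer_instance
      exact mono_of_mono u snd
    -- u is a kernel of fst
    have hkeru : IsLimit (KernelFork.ofι u hufst) := by
      refine KernelFork.IsLimit.ofι' u hufst ?_
      intro W t htf
      have hts : (t ≫ snd) ≫ cokernel.π ι = 0 := by
        rw [Category.assoc, ← hcond, ← Category.assoc, htf, zero_comp]
      refine ⟨Abelian.monoLift ι (t ≫ snd) hts, ?_⟩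
      apply pullback.hom_ext
      · rw [Category.assoc]
        show _ ≫ u ≫ fst = t ≫ fst
        rw [hufst, comp_zero, htf]
      · rw [Category.assoc]
        show _ ≫ u ≫ snd = t ≫ snd
        rw [husnd, Abelian.monoLift_comp]
    -- hence fst is a cokernel of u, so cokernel u ≅ B
    have hcokeru : IsColimit (CokernelCofork.ofπ fst hufst) :=
      Abelian.epiIsCokernelOfKernel _ hkeru
    have hisoB : cokernel u ≅ (B : C) :=
      IsColimit.coconePointUniqueUpToIso (cokernelIsCokernel u) hcokeru
    -- additivity along 0 → A → P → B → 0
    have hZP : Z (pullback B.arrow (cokernel.π ι)) = Z A + Z (B : C) := by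
      rw [hZadd u, hZiso _ _ hisoB]
    -- the pullback subobject of M₀
    have hPne : Subobject.mk snd ≠ ⊤ := by
      intro h
      haveI : IsIso snd := (Subobject.isIso_iff_mk_eq_top snd).2 h
      haveI : Epi (fst ≫ B.arrow) := by
        rw [hcond]; exact epi_comp _ _
      haveI : Epi B.arrow := epi_of_epi fst B.arrow
      haveI : IsIso B.arrow := isIso_of_mono_of_epi _
      exact hBne (Subobject.eq_top_of_isIso_arrow B)
    -- s₀ lies in the image of F applied to the pullback
    have hPrange : s₀ ∈ Set.range (F.map (Subobject.mk snd).arrow) := by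
      have hplim := isLimitPullbackConeMapOfIsLimit F pullback.condition
        (pullbackIsPullback B.arrow (cokernel.π ι))
      let tb : ModuleCat.of k k ⟶ F.obj (B : C) :=
        ModuleCat.ofHom (LinearMap.toSpanSingleton k _ b)
      let ts : ModuleCat.of k k ⟶ F.obj M₀ :=
        ModuleCat.ofHom (LinearMap.toSpanSingleton k _ s₀)
      have hw : tb ≫ F.map B.arrow = ts ≫ F.map (cokernel.π ι) := by
        apply ModuleCat.hom_ext
        apply LinearMap.ext; intro c
        show F.map B.arrow (c • b) = F.map (cokernel.π ι) (c • s₀)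
        rw [map_smul, map_smul, hb]
      obtain ⟨l, hl1, hl2⟩ := PullbackCone.IsLimit.lift' hplim tb ts hw
      have hs₀ : F.map snd (l (1 : k)) = s₀ := by
        have h1 := ConcreteCategory.congr_hom hl2 (1 : k)
        have h2 : F.map snd (l (1 : k)) = (1 : k) • s₀ := h1
        rwa [one_smul] at h2
      refine ⟨F.map (Subobject.underlyingIso snd).inv (l (1 : k)), ?_⟩
      have h3 : F.map (Subobject.underlyingIso snd).inv ≫ F.map (Subobject.mk snd).arrow
          = F.map snd := by rw [← F.map_comp, Subobject.underlyingIso_arrow]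
      have h4 := ConcreteCategory.congr_hom h3 (l (1 : k))
      exact h4.trans hs₀
    have hPlt := hstab _ hPne hPrange
    rw [hphM₀] at hPlt
    have hPph : pha Z ((Subobject.mk snd : Subobject M₀) : C)
        = (Z (pullback B.arrow (cokernel.π ι))).arg := by
      unfold pha
      rw [hZiso _ _ (Subobject.underlyingIso snd)]
    rw [hPph] at hPlt
    -- now the see-saw argument
    rw [hphM₁]
    by_cases hBzero : IsZero (B : C)
    · unfold pha
      rw [hZzero _ hBzero, Complex.arg_zero]
      exact hφpos
    · by_contra hge
      push_neg at hge
      unfold pha at hge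
      have hPnz : ¬ IsZero (pullback B.arrow (cokernel.π ι)) := by
        intro h
        exact hssA.1 (IsZero.of_mono u h)
      obtain ⟨hZPnz, hZPpos⟩ := hZH _ hPnz
      obtain ⟨hZBnz, hZBpos⟩ := hZH _ hBzero
      obtain ⟨hZAnz, hZApos⟩ := hZH A hssA.1
      have hargA : (Z A).arg = φ := hphA
      have := arg_le_arg_add hZAnz hZBnz (hZP ▸ hZPnz) hZApos hZBpos
        (by rw [← hZP]; exact hZPpos) (by rw [hargA]; exact hge)
      rw [← hZP, hargA] at this
      linarith

end StableFramedStmt
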